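/- Let p ∈ (1/2, 1), q = 1 − p, and α*, β* ∈ (0,1). For (ψ0, ψ1) ∈ [0,1]² define p̃ = (1−ψ0−ψ1)·p + ψ0, q̃ = (1−ψ0−ψ1)·q + ψ0, H(x,y) = x·ln(x/y) + (1−x)·ln((1−x)/(1−y)), and the functions g0(ψ0,ψ1) = ln(1/β*)·[1/((1−2q̃)·ln(p̃/(1−p̃))) − 1/H(q̃,p̃)] and g1(ψ0,ψ1) = ln(1/α*)·[1/((2p̃−1)·ln((1−q̃)/q̃)) − 1/H(p̃,q̃)]. Then there exists ε > 0 such that: (i) for all (ψ0, ψ1) with 0 ≤ ψ0 < ψ1 < ε, both ∂g_i/∂ψ0 < 0 and ∂g_i/∂ψ1 > 0 for i = 0, 1; and (ii) for all (ψ0, ψ1) with 0 ≤ ψ1 < ψ0 < ε, both ∂g_i/∂ψ0 > 0 and ∂g_i/∂ψ1 < 0 for i = 0, 1. -/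

import Mathlib

/-- Upper log difference bound. -/
lemma aux_log_sub_log_le {x y : ℝ} (hx : 0 < x) (hy : 0 < y) :
    Real.log x - Real.log y ≤ (x - y) / y := by
  have h := Real.log_le_sub_one_of_pos (show 0 < x / y by positivity)
  rw [Real.log_div hx.ne' hy.ne'] at h
  have h2 : x / y - 1 = (x - y) / y := by field_simp
  linarith [h2 ▸ h]

/-- Lower log difference bound. -/
lemma aux_le_log_sub_log {x y : ℝ} (hx : 0 < x) (hy : 0 < y) :
    (x - y) / x ≤ Real.log x - Real.log y := by
  have h := Real.one_sub_inv_le_log_of_pos (show 0 < x / y by positivity)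
  rw [Real.log_div hx.ne' hy.ne'] at h
  have h2 : 1 - (x / y)⁻¹ = (x - y) / x := by
    rw [inv_div]; field_simp
  linarith [h2 ▸ h]

/-- Two-sided bound for differences of the logit function `L t = log t - log (1-t)`. -/
lemma aux_L_diff_bounds {c x y : ℝ} (hc : 0 < c) (hcy : c ≤ y) (hyx : y ≤ x)
    (hx1 : x ≤ 1 - c) :
    2 * (x - y) ≤ (Real.log x - Real.log (1 - x)) - (Real.log y - Real.log (1 - y)) ∧
    (Real.log x - Real.log (1 - x)) - (Real.log y - Real.log (1 - y)) ≤ (2 / c) * (x - y) := by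
  have hy0 : 0 < y := lt_of_lt_of_le hc hcy
  have hx0 : 0 < x := lt_of_lt_of_le hy0 hyx
  have h1x : 0 < 1 - x := by linarith
  have h1y : 0 < 1 - y := by linarith
  have a1 : Real.log x - Real.log y ≤ (x - y) / y := aux_log_sub_log_le hx0 hy0
  have a2 : (x - y) / x ≤ Real.log x - Real.log y := aux_le_log_sub_log hx0 hy0
  have b1 : Real.log (1 - y) - Real.log (1 - x) ≤ ((1 - y) - (1 - x)) / (1 - x) :=
    aux_log_sub_log_le h1y h1x
  have b2 : ((1 - y) - (1 - x)) / (1 - y) ≤ Real.log (1 - y) - Real.log (1 - x) :=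
    aux_le_log_sub_log h1y h1x
  have e1 : ((1 - y) - (1 - x)) / (1 - x) = (x - y) / (1 - x) := by ring_nf
  have e2 : ((1 - y) - (1 - x)) / (1 - y) = (x - y) / (1 - y) := by ring_nf
  rw [e1] at b1; rw [e2] at b2
  constructor
  · have c1 : x - y ≤ (x - y) / x := by
      rw [le_div_iff₀ hx0]; nlinarith
    have c2 : x - y ≤ (x - y) / (1 - y) := by
      rw [le_div_iff₀ h1y]; nlinarith
    linarith
  · have c1 : (x - y) / y ≤ (x - y) / c := by
      rw [div_le_div_iff₀ hy0 hc]; nlinarith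
    have c2 : (x - y) / (1 - x) ≤ (x - y) / c := by
      have hcx : c ≤ 1 - x := by linarith
      rw [div_le_div_iff₀ h1x hc]; nlinarith
    have : (x - y) / c + (x - y) / c = (2 / c) * (x - y) := by ring
    linarith

/-- Bound on the absolute value of the logit function on `[c, 1-c]`. -/
lemma aux_L_abs_le {c t : ℝ} (hc : 0 < c) (hct : c ≤ t) (ht : t ≤ 1 - c) :
    |Real.log t - Real.log (1 - t)| ≤ 1 / c := by
  have hc2 : c ≤ 1 / 2 := by linarith
  have hcinv : 0 < 1 / c := by positivity
  rcases le_total t (1 / 2) with h | h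
  · have h' := aux_L_diff_bounds hc hct h (by linarith : (1:ℝ)/2 ≤ 1 - c)
    rw [show (1:ℝ) - 1/2 = 1/2 by norm_num] at h'
    have key : 2 / c * (1 / 2 - t) ≤ 1 / c := by
      rw [div_mul_eq_mul_div, div_le_div_iff₀ hc hc]; nlinarith
    rw [abs_le]
    constructor
    · linarith [h'.2, key]
    · linarith [h'.1, hcinv]
  · have h' := aux_L_diff_bounds hc hc2 h ht
    rw [show (1:ℝ) - 1/2 = 1/2 by norm_num] at h'
    have key : 2 / c * (t - 1 / 2) ≤ 1 / c := by
      rw [div_mul_eq_mul_div, div_le_div_iff₀ hc hc]; nlinarith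
    rw [abs_le]
    constructor
    · linarith [h'.1, hcinv]
    · linarith [h'.2, key]

/-- Two-sided bound for binary relative entropy. -/
lemma aux_H_bounds {a b : ℝ} (ha0 : 0 < a) (ha1 : a < 1) (hb0 : 0 < b) (hb1 : b < 1) :
    0 ≤ a * (Real.log a - Real.log b) + (1 - a) * (Real.log (1 - a) - Real.log (1 - b)) ∧
    a * (Real.log a - Real.log b) + (1 - a) * (Real.log (1 - a) - Real.log (1 - b))
      ≤ (a - b) ^ 2 / (b * (1 - b)) := by
  have h1a : 0 < 1 - a := by linarith
  have h1b : 0 < 1 - b := by linarith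
  have u1 : Real.log a - Real.log b ≤ (a - b) / b := aux_log_sub_log_le ha0 hb0
  have u2 : Real.log (1 - a) - Real.log (1 - b) ≤ ((1 - a) - (1 - b)) / (1 - b) :=
    aux_log_sub_log_le h1a h1b
  have l1 : (a - b) / a ≤ Real.log a - Real.log b := aux_le_log_sub_log ha0 hb0
  have l2 : ((1 - a) - (1 - b)) / (1 - a) ≤ Real.log (1 - a) - Real.log (1 - b) :=
    aux_le_log_sub_log h1a h1b
  constructor
  · have m1 : a * ((a - b) / a) ≤ a * (Real.log a - Real.log b) :=
      mul_le_mul_of_nonneg_left l1 ha0.le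
    have m2 : (1 - a) * (((1 - a) - (1 - b)) / (1 - a))
        ≤ (1 - a) * (Real.log (1 - a) - Real.log (1 - b)) :=
      mul_le_mul_of_nonneg_left l2 h1a.le
    have e1 : a * ((a - b) / a) = a - b := by field_simp
    have e2 : (1 - a) * (((1 - a) - (1 - b)) / (1 - a)) = b - a := by field_simp; ring
    rw [e1] at m1; rw [e2] at m2
    linarith
  · have m1 : a * (Real.log a - Real.log b) ≤ a * ((a - b) / b) :=
      mul_le_mul_of_nonneg_left u1 ha0.le
    have m2 : (1 - a) * (Real.log (1 - a) - Real.log (1 - b))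
        ≤ (1 - a) * (((1 - a) - (1 - b)) / (1 - b)) :=
      mul_le_mul_of_nonneg_left u2 h1a.le
    have e3 : a * ((a - b) / b) + (1 - a) * (((1 - a) - (1 - b)) / (1 - b))
        = (a - b) ^ 2 / (b * (1 - b)) := by
      field_simp
      ring
    linarith

noncomputable def dltc (p : ℝ) : ℝ := min (2 * p - 1) (2 - 2 * p) / 8
noncomputable def Kcc (p : ℝ) : ℝ := 2 / ((1 - p - dltc p) * (p + dltc p))
noncomputable def w0c (p : ℝ) : ℝ := (36 * dltc p ^ 2) ^ 2 / (4 * Kcc p ^ 3)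

set_option maxHeartbeats 1000000 in
lemma master (p : ℝ) (hp : 1 / 2 < p) (hp1 : p < 1) (C : ℝ) (hC : 0 < C)
    (uf vf : ℝ → ℝ) (t0 u' v' s a : ℝ)
    (hud : HasDerivAt uf u' t0) (hvd : HasDerivAt vf v' t0)
    (hs : s = 1 ∨ s = -1) (ha0 : 0 ≤ a) (ha1 : a ≤ 1)
    (hu' : u' = s * a) (hv' : v' = s * (1 - a))
    (hub : |uf t0 - p| ≤ dltc p) (hvb : |vf t0 - (1 - p)| ≤ dltc p)
    (hwne : uf t0 + vf t0 - 1 ≠ 0) (hwle : |uf t0 + vf t0 - 1| ≤ w0c p) :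
    ∃ d, HasDerivAt (fun t => C * (((1 - 2 * vf t) * Real.log (uf t / (1 - uf t)))⁻¹
        - (vf t * Real.log (vf t / uf t)
            + (1 - vf t) * Real.log ((1 - vf t) / (1 - uf t)))⁻¹)) d t0
      ∧ 0 < d * (s * (uf t0 + vf t0 - 1)) := by
  -- opaque constants
  obtain ⟨δ, hδdef⟩ : ∃ x, x = dltc p := ⟨_, rfl⟩
  obtain ⟨c, hcdef⟩ : ∃ x, x = 1 - p - δ := ⟨_, rfl⟩
  obtain ⟨K, hKdef⟩ : ∃ x, x = Kcc p := ⟨_, rfl⟩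
  rw [← hδdef] at hub hvb
  -- numeric groundwork
  have hm1 : min (2 * p - 1) (2 - 2 * p) ≤ 2 * p - 1 := min_le_left _ _
  have hm2 : min (2 * p - 1) (2 - 2 * p) ≤ 2 - 2 * p := min_le_right _ _
  have hm3 : 0 < min (2 * p - 1) (2 - 2 * p) := lt_min (by linarith) (by linarith)
  have hδval : δ = min (2 * p - 1) (2 - 2 * p) / 8 := by rw [hδdef]; rfl
  have hδ0 : 0 < δ := by rw [hδval]; linarith
  have hδa : 8 * δ ≤ 2 * p - 1 := by rw [hδval]; linarith
  have hδb : 8 * δ ≤ 2 - 2 * p := by rw [hδval]; linarith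
  have hc0 : 0 < c := by rw [hcdef]; linarith
  have hc3δ : 3 * δ ≤ c := by rw [hcdef]; linarith
  have hc12 : c ≤ 1 / 2 - 5 * δ := by rw [hcdef]; linarith
  obtain ⟨M, hMdef⟩ : ∃ x, x = 1 / c := ⟨_, rfl⟩
  have hM0 : 0 < M := by rw [hMdef]; positivity
  have hMc : M * c = 1 := by rw [hMdef]; field_simp
  have hKeq : K = 2 / (c * (1 - c)) := by
    rw [hKdef, hcdef]; show Kcc p = _; unfold Kcc; rw [← hδdef]; ring_nf
  have h1c : 0 < 1 - c := by linarith
  have hK0 : 0 < K := by rw [hKeq]; positivity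
  have hK2c : 2 * M ≤ K := by
    rw [hMdef, hKeq, show 2 * (1 / c) = 2 / c by ring,
      div_le_div_iff₀ hc0 (by positivity : (0:ℝ) < c * (1 - c))]
    linarith [mul_le_mul_of_nonneg_left (show 1 - c ≤ 1 by linarith) hc0.le]
  have hK8 : 8 ≤ K := by
    rw [hKeq, le_div_iff₀ (by positivity)]; linarith [sq_nonneg (c - 1 / 2)]
  have hw0val : w0c p = (36 * δ ^ 2) ^ 2 / (4 * K ^ 3) := by rw [hδdef, hKdef]; rfl
  have hw0pos : 0 < w0c p := by rw [hw0val]; positivity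
  have hδ8 : δ ≤ 1 / 8 := by linarith
  have hK3 : 512 ≤ K ^ 3 := by
    have h8 := pow_le_pow_left₀ (by norm_num : (0:ℝ) ≤ 8) hK8 3
    norm_num at h8
    linarith
  have hw0le1 : w0c p ≤ 1 := by
    rw [hw0val, div_le_one (by positivity)]
    have h1 : δ ^ 2 ≤ 1 / 64 := by
      linarith [mul_le_mul hδ8 hδ8 hδ0.le (by norm_num : (0:ℝ) ≤ 1 / 8)]
    have h2 : δ ^ 2 * δ ^ 2 ≤ 1 / 64 * (1 / 64) :=
      mul_le_mul h1 h1 (sq_nonneg δ) (by norm_num)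
    linarith [h2, hK3]
  -- point bounds (in raw form)
  obtain ⟨hub1, hub2⟩ := abs_le.mp hub
  obtain ⟨hvb1, hvb2⟩ := abs_le.mp hvb
  have hu12 : 1 / 2 + 3 * δ ≤ uf t0 := by linarith
  have hu1c : uf t0 ≤ 1 - c := by rw [hcdef]; linarith
  have hucl : c ≤ uf t0 := by linarith
  have hv12 : vf t0 ≤ 1 / 2 - 3 * δ := by linarith
  have hvcl : c ≤ vf t0 := by rw [hcdef]; linarith
  have hv1c : vf t0 ≤ 1 - c := by linarith
  have hu0 : 0 < uf t0 := by linarith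
  have hu1 : uf t0 < 1 := by linarith
  have hv0 : 0 < vf t0 := by linarith
  have hv1 : vf t0 < 1 := by linarith
  have h1u0 : 0 < 1 - uf t0 := by linarith
  have h1v0 : 0 < 1 - vf t0 := by linarith
  have hc1u : c ≤ 1 - uf t0 := by linarith
  have h1u1c : 1 - uf t0 ≤ 1 - c := by linarith
  have hune : uf t0 ≠ 0 := hu0.ne'
  have h1une : (1 : ℝ) - uf t0 ≠ 0 := h1u0.ne'
  have hvne : vf t0 ≠ 0 := hv0.ne'
  have h1vne : (1 : ℝ) - vf t0 ≠ 0 := h1v0.ne'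
  have hLA_split : Real.log (uf t0 / (1 - uf t0))
      = Real.log (uf t0) - Real.log (1 - uf t0) := Real.log_div hune h1une
  have hL1_split : Real.log (vf t0 / uf t0) = Real.log (vf t0) - Real.log (uf t0) :=
    Real.log_div hvne hune
  have hL2_split : Real.log ((1 - vf t0) / (1 - uf t0))
      = Real.log (1 - vf t0) - Real.log (1 - uf t0) := Real.log_div h1vne h1une
  have hLu6 : 6 * δ ≤ Real.log (uf t0) - Real.log (1 - uf t0) := by
    have h' := (aux_L_diff_bounds hc0 (by linarith : c ≤ 1 / 2)
      (by linarith : 1 / 2 ≤ uf t0) hu1c).1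
    rw [show (1:ℝ) - 1 / 2 = 1 / 2 by norm_num] at h'
    linarith
  have hLu_abs : |Real.log (uf t0) - Real.log (1 - uf t0)| ≤ M := by
    rw [hMdef]; exact aux_L_abs_le hc0 hucl hu1c
  have hLv_abs : |Real.log (vf t0) - Real.log (1 - vf t0)| ≤ M := by
    rw [hMdef]; exact aux_L_abs_le hc0 hvcl hv1c
  have h12v : 6 * δ ≤ 1 - 2 * vf t0 := by linarith
  have hA0 : 0 < (1 - 2 * vf t0) * Real.log (uf t0 / (1 - uf t0)) := by
    rw [hLA_split]
    have hprod := mul_le_mul h12v hLu6 (by positivity : (0:ℝ) ≤ 6 * δ)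
      (by linarith : (0:ℝ) ≤ 1 - 2 * vf t0)
    linarith [hprod, mul_pos hδ0 hδ0]
  have hlogupos : 0 < Real.log (uf t0 / (1 - uf t0)) := by rw [hLA_split]; linarith
  have hN_eq : (vf t0 * Real.log (vf t0 / uf t0)
        + (1 - vf t0) * Real.log ((1 - vf t0) / (1 - uf t0)))
      - (1 - 2 * vf t0) * Real.log (uf t0 / (1 - uf t0))
      = vf t0 * (Real.log (vf t0) - Real.log (1 - uf t0))
        + (1 - vf t0) * (Real.log (1 - vf t0) - Real.log (uf t0)) := by
    rw [hLA_split, hL1_split, hL2_split]; ring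
  have hHb := aux_H_bounds hv0 hv1 h1u0 (by linarith : 1 - uf t0 < 1)
  rw [show (1:ℝ) - (1 - uf t0) = uf t0 by ring] at hHb
  have hN0 : 0 ≤ (vf t0 * Real.log (vf t0 / uf t0)
        + (1 - vf t0) * Real.log ((1 - vf t0) / (1 - uf t0)))
      - (1 - 2 * vf t0) * Real.log (uf t0 / (1 - uf t0)) := by
    rw [hN_eq]; exact hHb.1
  have hB0 : 0 < vf t0 * Real.log (vf t0 / uf t0)
      + (1 - vf t0) * Real.log ((1 - vf t0) / (1 - uf t0)) := by linarith
  -- derivative construction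
  have d1u : HasDerivAt (fun t => 1 - uf t) (-u') t0 := by
    exact hud.const_sub 1
  have dq1 : HasDerivAt (fun t => uf t / (1 - uf t))
      ((u' * (1 - uf t0) - uf t0 * -u') / (1 - uf t0) ^ 2) t0 := hud.div d1u h1une
  have hx1 : uf t0 / (1 - uf t0) ≠ 0 := (div_pos hu0 h1u0).ne'
  have dlog1 : HasDerivAt (fun t => Real.log (uf t / (1 - uf t)))
      (((u' * (1 - uf t0) - uf t0 * -u') / (1 - uf t0) ^ 2) / (uf t0 / (1 - uf t0))) t0 :=
    dq1.log hx1
  have dcoef : HasDerivAt (fun t => 1 - 2 * vf t) (-(2 * v')) t0 := by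
    exact (hvd.const_mul 2).const_sub 1
  have dA : HasDerivAt (fun t => (1 - 2 * vf t) * Real.log (uf t / (1 - uf t)))
      (-(2 * v') * Real.log (uf t0 / (1 - uf t0))
        + (1 - 2 * vf t0) * (((u' * (1 - uf t0) - uf t0 * -u') / (1 - uf t0) ^ 2)
            / (uf t0 / (1 - uf t0)))) t0 := dcoef.mul dlog1
  have dAi := dA.inv hA0.ne'
  have dq2 : HasDerivAt (fun t => vf t / uf t)
      ((v' * uf t0 - vf t0 * u') / uf t0 ^ 2) t0 := hvd.div hud hune
  have hx2 : vf t0 / uf t0 ≠ 0 := (div_pos hv0 hu0).ne'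
  have dlog2 : HasDerivAt (fun t => Real.log (vf t / uf t))
      (((v' * uf t0 - vf t0 * u') / uf t0 ^ 2) / (vf t0 / uf t0)) t0 := dq2.log hx2
  have dB1 : HasDerivAt (fun t => vf t * Real.log (vf t / uf t))
      (v' * Real.log (vf t0 / uf t0)
        + vf t0 * (((v' * uf t0 - vf t0 * u') / uf t0 ^ 2) / (vf t0 / uf t0))) t0 :=
    hvd.mul dlog2
  have d1v : HasDerivAt (fun t => 1 - vf t) (-v') t0 := by
    exact hvd.const_sub 1
  have dq3 : HasDerivAt (fun t => (1 - vf t) / (1 - uf t))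
      ((-v' * (1 - uf t0) - (1 - vf t0) * -u') / (1 - uf t0) ^ 2) t0 :=
    d1v.div d1u h1une
  have hx3 : (1 - vf t0) / (1 - uf t0) ≠ 0 := (div_pos h1v0 h1u0).ne'
  have dlog3 : HasDerivAt (fun t => Real.log ((1 - vf t) / (1 - uf t)))
      (((-v' * (1 - uf t0) - (1 - vf t0) * -u') / (1 - uf t0) ^ 2)
        / ((1 - vf t0) / (1 - uf t0))) t0 := dq3.log hx3
  have dB2 : HasDerivAt (fun t => (1 - vf t) * Real.log ((1 - vf t) / (1 - uf t)))
      (-v' * Real.log ((1 - vf t0) / (1 - uf t0))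
        + (1 - vf t0) * (((-v' * (1 - uf t0) - (1 - vf t0) * -u') / (1 - uf t0) ^ 2)
            / ((1 - vf t0) / (1 - uf t0)))) t0 := d1v.mul dlog3
  have dB := dB1.add dB2
  have dBi := dB.inv hB0.ne'
  have dfull := (dAi.sub dBi).const_mul C
  have h12vne : (1 : ℝ) - 2 * vf t0 ≠ 0 := by linarith
  have hlogune : Real.log (uf t0 / (1 - uf t0)) ≠ 0 := hlogupos.ne'
  have hBne : vf t0 * Real.log (vf t0 / uf t0)
      + (1 - vf t0) * Real.log ((1 - vf t0) / (1 - uf t0)) ≠ 0 := hB0.ne'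
  have dmain : HasDerivAt (fun t => C * (((1 - 2 * vf t) * Real.log (uf t / (1 - uf t)))⁻¹
      - (vf t * Real.log (vf t / uf t)
          + (1 - vf t) * Real.log ((1 - vf t) / (1 - uf t)))⁻¹))
      (C * (((v' * (Real.log (vf t0 / uf t0) - Real.log ((1 - vf t0) / (1 - uf t0)))
              + u' * ((1 - vf t0) / (1 - uf t0) - vf t0 / uf t0))
            * ((1 - 2 * vf t0) * Real.log (uf t0 / (1 - uf t0))) ^ 2
          - (-(2 * v') * Real.log (uf t0 / (1 - uf t0))
              + (1 - 2 * vf t0) * (u' / (uf t0 * (1 - uf t0))))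
            * (vf t0 * Real.log (vf t0 / uf t0)
              + (1 - vf t0) * Real.log ((1 - vf t0) / (1 - uf t0))) ^ 2)
        / (((1 - 2 * vf t0) * Real.log (uf t0 / (1 - uf t0))) ^ 2
          * (vf t0 * Real.log (vf t0 / uf t0)
            + (1 - vf t0) * Real.log ((1 - vf t0) / (1 - uf t0))) ^ 2))) t0 := by
    refine dfull.congr_deriv ?_
    simp only [Pi.add_apply]
    generalize Real.log (uf t0 / (1 - uf t0)) = L1 at hlogune ⊢
    generalize Real.log (vf t0 / uf t0) = L2 at hBne ⊢
    generalize Real.log ((1 - vf t0) / (1 - uf t0)) = L3 at hBne ⊢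
    generalize vf t0 * L2 + (1 - vf t0) * L3 = Bv at hBne ⊢
    field_simp
    ring
  clear dfull dAi dBi dA dB dB1 dB2 dq1 dq2 dq3 dlog1 dlog2 dlog3 d1u d1v dcoef
  -- abstract point values
  set u := uf t0 with hudef
  set v := vf t0 with hvdef
  clear_value u v
  set w := u + v - 1 with hwdef
  clear_value w
  set A := (1 - 2 * v) * Real.log (u / (1 - u)) with hAdef
  set B := v * Real.log (v / u) + (1 - v) * Real.log ((1 - v) / (1 - u)) with hBdef
  set Ac := -(2 * v') * Real.log (u / (1 - u)) + (1 - 2 * v) * (u' / (u * (1 - u)))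
    with hAcdef
  set Bc := v' * (Real.log (v / u) - Real.log ((1 - v) / (1 - u)))
      + u' * ((1 - v) / (1 - u) - v / u) with hBcdef
  clear_value A B Ac Bc
  -- w facts
  have hwabs : |w| ≤ w0c p := hwle
  have hw1 : |w| ≤ 1 := le_trans hwabs hw0le1
  have hwl : -1 ≤ w := (abs_le.mp hw1).1
  have hwu : w ≤ 1 := (abs_le.mp hw1).2
  have hw2pos : 0 < w ^ 2 := lt_of_le_of_ne (sq_nonneg w) (Ne.symm (pow_ne_zero 2 hwne))
  have hw2le1 : w ^ 2 ≤ 1 := by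
    linarith [mul_nonneg (show (0:ℝ) ≤ 1 - w by linarith) (show (0:ℝ) ≤ 1 + w by linarith)]
  -- more bounds
  have hAb : 36 * δ ^ 2 ≤ A := by
    rw [hAdef, hLA_split]
    linarith [mul_le_mul h12v hLu6 (by positivity : (0:ℝ) ≤ 6 * δ)
      (by linarith : (0:ℝ) ≤ 1 - 2 * v)]
  have hNle : B - A ≤ 2 * M * w ^ 2 := by
    have hsq : (v - (1 - u)) ^ 2 = w ^ 2 := by rw [hwdef]; ring
    have haux : c ≤ 2 * ((1 - u) * u) := by
      linarith [mul_le_mul_of_nonneg_right hc1u hu0.le,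
        mul_le_mul_of_nonneg_left (by linarith : 1 / 2 ≤ u) hc0.le]
    have hfrac : (v - (1 - u)) ^ 2 / ((1 - u) * u) ≤ 2 * M * w ^ 2 := by
      rw [hsq, div_le_iff₀ (mul_pos h1u0 hu0)]
      have hint := mul_le_mul_of_nonneg_left haux (mul_nonneg hM0.le (sq_nonneg w))
      have h2 : M * w ^ 2 * c = w ^ 2 := by
        rw [show M * w ^ 2 * c = M * c * w ^ 2 by ring, hMc, one_mul]
      linarith [hint, h2]
    calc B - A = v * (Real.log v - Real.log (1 - u))
          + (1 - v) * (Real.log (1 - v) - Real.log u) := hN_eq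
      _ ≤ (v - (1 - u)) ^ 2 / ((1 - u) * u) := hHb.2
      _ ≤ 2 * M * w ^ 2 := hfrac
  have hN0' : 0 ≤ B - A := hN0
  have hBb : 36 * δ ^ 2 ≤ B := by linarith
  have hALA : A ≤ M := by
    have h2 := (abs_le.mp hLu_abs).2
    rw [hAdef, hLA_split]
    have hL0 : 0 ≤ Real.log u - Real.log (1 - u) := by linarith
    linarith [mul_le_mul (show 1 - 2 * v ≤ 1 by linarith) h2 hL0 zero_le_one]
  have hABu : A + B ≤ 2 * K := by
    have h2c : 2 * M * w ^ 2 ≤ 2 * M := by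
      have := mul_le_mul_of_nonneg_left hw2le1 (by positivity : (0:ℝ) ≤ 2 * M)
      linarith
    linarith [hNle, hALA, hK2c, h2c]
  have hAB0 : 0 ≤ A + B := by linarith [hA0, hB0]
  -- |Bc| bound
  have habs_s : |s| = 1 := by rcases hs with h | h <;> simp [h]
  have hu'abs : |u'| ≤ 1 := by
    rw [hu', abs_mul, habs_s, one_mul, abs_le]; constructor <;> linarith
  have hv'abs : |v'| ≤ 1 := by
    rw [hv', abs_mul, habs_s, one_mul, abs_le]; constructor <;> linarith
  have hX1 : |Real.log (v / u) - Real.log ((1 - v) / (1 - u))| ≤ 2 * M := by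
    rw [hL1_split, hL2_split,
      show Real.log v - Real.log u - (Real.log (1 - v) - Real.log (1 - u))
        = Real.log v - Real.log (1 - v) - (Real.log u - Real.log (1 - u)) by ring, abs_le]
    have h1 := abs_le.mp hLu_abs
    have h2 := abs_le.mp hLv_abs
    constructor
    · linarith [h1.2, h2.1]
    · linarith [h1.1, h2.2]
  have hdivv : v / u ≤ 1 := by rw [div_le_one hu0]; linarith
  have hdivv0 : 0 ≤ v / u := le_of_lt (div_pos hv0 hu0)
  have hdiv1 : (1 - v) / (1 - u) ≤ M := by
    rw [hMdef]; exact div_le_div₀ zero_le_one (by linarith) hc0 hc1u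
  have hdiv10 : 0 ≤ (1 - v) / (1 - u) := le_of_lt (div_pos h1v0 h1u0)
  have hX2 : |(1 - v) / (1 - u) - v / u| ≤ M + 1 := by
    rw [abs_le]; constructor <;> linarith
  have hBc_abs : |Bc| ≤ 2 * K := by
    rw [hBcdef]
    calc |v' * (Real.log (v / u) - Real.log ((1 - v) / (1 - u)))
          + u' * ((1 - v) / (1 - u) - v / u)|
        ≤ |v' * (Real.log (v / u) - Real.log ((1 - v) / (1 - u)))|
          + |u' * ((1 - v) / (1 - u) - v / u)| := abs_add_le _ _
      _ = |v'| * |Real.log (v / u) - Real.log ((1 - v) / (1 - u))|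
          + |u'| * |(1 - v) / (1 - u) - v / u| := by rw [abs_mul, abs_mul]
      _ ≤ 1 * (2 * M) + 1 * (M + 1) :=
          add_le_add (mul_le_mul hv'abs hX1 (abs_nonneg _) zero_le_one)
            (mul_le_mul hu'abs hX2 (abs_nonneg _) zero_le_one)
      _ ≤ 2 * K := by linarith [hK2c, hK8, hM0]
  -- Delta bound
  have hΔeq : Bc - Ac = u' * (w / (u * (1 - u)))
      + v' * ((Real.log v - Real.log (1 - v)) + (Real.log u - Real.log (1 - u))) := by
    rw [hBcdef, hAcdef, hL1_split, hL2_split, hLA_split, hwdef]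
    field_simp
    ring
  have hwQ : 2 * w ^ 2 ≤ w * ((Real.log v - Real.log (1 - v))
      + (Real.log u - Real.log (1 - u))) := by
    rcases le_or_gt 0 w with h | h
    · have h' := (aux_L_diff_bounds hc0 hc1u
        (by rw [hwdef] at h; linarith : 1 - u ≤ v) hv1c).1
      rw [show (1:ℝ) - (1 - u) = u by ring] at h'
      have hQge : 2 * w ≤ (Real.log v - Real.log (1 - v))
          + (Real.log u - Real.log (1 - u)) := by rw [hwdef]; linarith
      linarith [mul_le_mul_of_nonneg_left hQge h]
    · have h' := (aux_L_diff_bounds hc0 hvcl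
        (by rw [hwdef] at h; linarith : v ≤ 1 - u) h1u1c).1
      rw [show (1:ℝ) - (1 - u) = u by ring] at h'
      have hQle : (Real.log v - Real.log (1 - v))
          + (Real.log u - Real.log (1 - u)) ≤ 2 * w := by rw [hwdef]; linarith
      linarith [mul_le_mul_of_nonneg_left hQle (by linarith : (0:ℝ) ≤ -w)]
  have hwP : 2 * w ^ 2 ≤ w * (w / (u * (1 - u))) := by
    have huu : u * (1 - u) ≤ 1 / 2 := by linarith [sq_nonneg (u - 1 / 2)]
    have h0 : 0 < u * (1 - u) := mul_pos hu0 h1u0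
    rw [show w * (w / (u * (1 - u))) = w ^ 2 / (u * (1 - u)) by ring, le_div_iff₀ h0]
    linarith [mul_le_mul_of_nonneg_left huu (sq_nonneg w)]
  have hΔsw : 2 * w ^ 2 ≤ (Bc - Ac) * (s * w) := by
    rw [hΔeq, hu', hv']
    rcases hs with h | h <;> rw [h] <;>
      linarith [mul_le_mul_of_nonneg_left hwP ha0,
        mul_le_mul_of_nonneg_left hwQ (by linarith : (0:ℝ) ≤ 1 - a)]
  -- term bound
  have habs_sw : |s * w| = |w| := by rcases hs with h | h <;> simp [h]
  have h4 : 4 * K ^ 3 * w0c p = (36 * δ ^ 2) ^ 2 := by rw [hw0val]; field_simp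
  have hterm : |(B - A) * Bc * ((A + B) * (s * w))| ≤ w ^ 2 * (36 * δ ^ 2) ^ 2 := by
    have e1 : |B - A| = B - A := abs_of_nonneg hN0'
    have e2 : |A + B| = A + B := abs_of_nonneg hAB0
    calc |(B - A) * Bc * ((A + B) * (s * w))|
        = |B - A| * |Bc| * (|A + B| * |s * w|) := by rw [abs_mul, abs_mul, abs_mul]
      _ ≤ 2 * M * w ^ 2 * (2 * K) * (2 * K * w0c p) := by
          apply mul_le_mul (mul_le_mul (by rw [e1]; exact hNle) hBc_abs (abs_nonneg _)
            (by positivity))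
          · exact mul_le_mul (by rw [e2]; exact hABu) (by rw [habs_sw]; exact hwabs)
              (abs_nonneg _) (by positivity)
          · positivity
          · positivity
      _ ≤ w ^ 2 * (36 * δ ^ 2) ^ 2 := by
          have h5 : w ^ 2 * (4 * K ^ 3 * w0c p) = w ^ 2 * (36 * δ ^ 2) ^ 2 := by rw [h4]
          linarith [mul_nonneg (sub_nonneg.mpr hK2c)
            (by positivity : (0:ℝ) ≤ w ^ 2 * (4 * K ^ 2 * w0c p)), h5]
  have hkey : 0 < (Bc * A ^ 2 - Ac * B ^ 2) * (s * w) := by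
    have hEeq : (Bc * A ^ 2 - Ac * B ^ 2) * (s * w)
        = (Bc - Ac) * (s * w) * B ^ 2 - (B - A) * Bc * ((A + B) * (s * w)) := by ring
    rw [hEeq]
    have hB2 : (36 * δ ^ 2) ^ 2 ≤ B ^ 2 := pow_le_pow_left₀ (by positivity) hBb 2
    have ht1 : 2 * w ^ 2 * (36 * δ ^ 2) ^ 2 ≤ (Bc - Ac) * (s * w) * B ^ 2 :=
      mul_le_mul hΔsw hB2 (by positivity) (le_trans (by positivity) hΔsw)
    have ht2 := abs_le.mp hterm
    linarith [ht1, ht2.2, mul_pos hw2pos (show (0:ℝ) < (36 * δ ^ 2) ^ 2 by positivity)]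
  refine ⟨C * ((Bc * A ^ 2 - Ac * B ^ 2) / (A ^ 2 * B ^ 2)), ?_, ?_⟩
  · exact dmain
  · have hA0' : 0 < A := hA0
    have hB0' : 0 < B := hB0
    have hrw : C * ((Bc * A ^ 2 - Ac * B ^ 2) / (A ^ 2 * B ^ 2)) * (s * w)
        = C * ((Bc * A ^ 2 - Ac * B ^ 2) * (s * w)) / (A ^ 2 * B ^ 2) := by ring
    rw [hrw]
    exact div_pos (mul_pos hC hkey) (mul_pos (pow_pos hA0' 2) (pow_pos hB0' 2))


set_option maxHeartbeats 1000000

/-- Part 2 of Lemma 2 of the paper: near the origin, the asymptotic differences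
`g0 = T̂_E⁰ − T̂_L⁰` and `g1 = T̂_E¹ − T̂_L¹` between the expected sample sizes of the
eavesdropper and the legitimate fusion center have the stated sign pattern of partial
derivatives on the regions `ψ1 > ψ0` and `ψ0 > ψ1`. -/
theorem stmt_18 (p : ℝ) (hp : 1 / 2 < p) (hp1 : p < 1) (q : ℝ) (hq : q = 1 - p)
    (αs βs : ℝ) (hαs : αs ∈ Set.Ioo (0 : ℝ) 1) (hβs : βs ∈ Set.Ioo (0 : ℝ) 1)
    (H : ℝ → ℝ → ℝ)
    (hH : ∀ x y, H x y = x * Real.log (x / y) + (1 - x) * Real.log ((1 - x) / (1 - y)))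
    (ptf qtf : ℝ → ℝ → ℝ)
    (hptf : ∀ x y, ptf x y = (1 - x - y) * p + x)
    (hqtf : ∀ x y, qtf x y = (1 - x - y) * q + x)
    (g0 g1 : ℝ → ℝ → ℝ)
    (hg0 : ∀ x y, g0 x y = Real.log (1 / βs) *
      (1 / ((1 - 2 * qtf x y) * Real.log (ptf x y / (1 - ptf x y)))
        - 1 / H (qtf x y) (ptf x y)))
    (hg1 : ∀ x y, g1 x y = Real.log (1 / αs) *
      (1 / ((2 * ptf x y - 1) * Real.log ((1 - qtf x y) / qtf x y))
        - 1 / H (ptf x y) (qtf x y))) :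
    ∃ ε > (0 : ℝ),
      (∀ ψ0 ψ1 : ℝ, 0 ≤ ψ0 → ψ0 < ψ1 → ψ1 < ε →
        (∃ d < (0 : ℝ), HasDerivAt (fun x => g0 x ψ1) d ψ0) ∧
        (∃ d > (0 : ℝ), HasDerivAt (fun y => g0 ψ0 y) d ψ1) ∧
        (∃ d < (0 : ℝ), HasDerivAt (fun x => g1 x ψ1) d ψ0) ∧
        (∃ d > (0 : ℝ), HasDerivAt (fun y => g1 ψ0 y) d ψ1)) ∧
      (∀ ψ0 ψ1 : ℝ, 0 ≤ ψ1 → ψ1 < ψ0 → ψ0 < ε →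
        (∃ d > (0 : ℝ), HasDerivAt (fun x => g0 x ψ1) d ψ0) ∧
        (∃ d < (0 : ℝ), HasDerivAt (fun y => g0 ψ0 y) d ψ1) ∧
        (∃ d > (0 : ℝ), HasDerivAt (fun x => g1 x ψ1) d ψ0) ∧
        (∃ d < (0 : ℝ), HasDerivAt (fun y => g1 ψ0 y) d ψ1)) := by
  subst hq
  obtain ⟨hβ0, hβ1⟩ := hβs
  obtain ⟨hα0, hα1⟩ := hαs
  have hC0 : 0 < Real.log (1 / βs) := Real.log_pos (by rw [lt_div_iff₀ hβ0]; linarith)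
  have hC1 : 0 < Real.log (1 / αs) := Real.log_pos (by rw [lt_div_iff₀ hα0]; linarith)
  have hδval : dltc p = min (2 * p - 1) (2 - 2 * p) / 8 := rfl
  have hm1 : min (2 * p - 1) (2 - 2 * p) ≤ 2 * p - 1 := min_le_left _ _
  have hm2 : min (2 * p - 1) (2 - 2 * p) ≤ 2 - 2 * p := min_le_right _ _
  have hm3 : 0 < min (2 * p - 1) (2 - 2 * p) := lt_min (by linarith) (by linarith)
  have hδpos : 0 < dltc p := by rw [hδval]; linarith
  have hδa : 8 * dltc p ≤ 2 * p - 1 := by rw [hδval]; linarith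
  have hδb : 8 * dltc p ≤ 2 - 2 * p := by rw [hδval]; linarith
  have hKpos : 0 < Kcc p := by
    have h1 : 0 < 1 - p - dltc p := by linarith
    have h2 : 0 < p + dltc p := by linarith
    have : Kcc p = 2 / ((1 - p - dltc p) * (p + dltc p)) := rfl
    rw [this]; positivity
  have hW : 0 < w0c p := by
    have : w0c p = (36 * dltc p ^ 2) ^ 2 / (4 * Kcc p ^ 3) := rfl
    rw [this]
    exact div_pos (pow_pos (mul_pos (by norm_num) (pow_pos hδpos 2)) 2)
      (mul_pos (by norm_num) (pow_pos hKpos 3))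
  set ε := min (dltc p) (w0c p) with hεdef
  have hεpos : 0 < ε := lt_min hδpos hW
  have hεδ : ε ≤ dltc p := min_le_left _ _
  have hεw : ε ≤ w0c p := min_le_right _ _
  have mainpt : ∀ ψ0 ψ1 : ℝ, 0 ≤ ψ0 → 0 ≤ ψ1 → ψ0 ≠ ψ1 → ψ0 < ε → ψ1 < ε →
      (∃ d, HasDerivAt (fun x => g0 x ψ1) d ψ0 ∧ 0 < d * (ψ0 - ψ1)) ∧
      (∃ d, HasDerivAt (fun y => g0 ψ0 y) d ψ1 ∧ 0 < d * (ψ1 - ψ0)) ∧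
      (∃ d, HasDerivAt (fun x => g1 x ψ1) d ψ0 ∧ 0 < d * (ψ0 - ψ1)) ∧
      (∃ d, HasDerivAt (fun y => g1 ψ0 y) d ψ1 ∧ 0 < d * (ψ1 - ψ0)) := by
    intro ψ0 ψ1 h0 h1 hne h0e h1e
    have hmul1 : ψ1 * p ≤ ψ1 := by
      have := mul_le_mul_of_nonneg_left hp1.le h1
      linarith
    have hmul2 : ψ0 * (1 - p) ≤ ψ0 := by
      have := mul_le_mul_of_nonneg_left (show 1 - p ≤ 1 by linarith) h0
      linarith
    have hmul3 : ψ0 * p ≤ ψ0 := by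
      have := mul_le_mul_of_nonneg_left hp1.le h0
      linarith
    have hmul4 : ψ1 * (1 - p) ≤ ψ1 := by
      have := mul_le_mul_of_nonneg_left (show 1 - p ≤ 1 by linarith) h1
      linarith
    have hmn1 : 0 ≤ ψ0 * (1 - p) := mul_nonneg h0 (by linarith)
    have hmn2 : 0 ≤ ψ1 * p := mul_nonneg h1 (by linarith)
    have hmn3 : 0 ≤ ψ0 * p := mul_nonneg h0 (by linarith)
    have hmn4 : 0 ≤ ψ1 * (1 - p) := mul_nonneg h1 (by linarith)
    -- common bounds
    have hub : |ptf ψ0 ψ1 - p| ≤ dltc p := by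
      rw [hptf, abs_le]
      constructor <;> [nlinarith [hmn1, hmul1]; nlinarith [hmn2, hmul2]]
    have hvb : |qtf ψ0 ψ1 - (1 - p)| ≤ dltc p := by
      rw [hqtf, abs_le]
      constructor <;> [nlinarith [hmn3, hmul4]; nlinarith [hmn4, hmul3]]
    have hub' : |(1 - qtf ψ0 ψ1) - p| ≤ dltc p := by
      have he : (1 - qtf ψ0 ψ1) - p = -(qtf ψ0 ψ1 - (1 - p)) := by ring
      rw [he, abs_neg]; exact hvb
    have hvb' : |(1 - ptf ψ0 ψ1) - (1 - p)| ≤ dltc p := by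
      have he : (1 - ptf ψ0 ψ1) - (1 - p) = -(ptf ψ0 ψ1 - p) := by ring
      rw [he, abs_neg]; exact hub
    have hwval : ptf ψ0 ψ1 + qtf ψ0 ψ1 - 1 = ψ0 - ψ1 := by rw [hptf, hqtf]; ring
    have hwne : ptf ψ0 ψ1 + qtf ψ0 ψ1 - 1 ≠ 0 := by
      rw [hwval]; exact sub_ne_zero.mpr hne
    have hwle : |ptf ψ0 ψ1 + qtf ψ0 ψ1 - 1| ≤ w0c p := by
      rw [hwval, abs_le]; constructor <;> linarith
    have hwval' : (1 - qtf ψ0 ψ1) + (1 - ptf ψ0 ψ1) - 1 = ψ1 - ψ0 := by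
      rw [hptf, hqtf]; ring
    have hwne' : (1 - qtf ψ0 ψ1) + (1 - ptf ψ0 ψ1) - 1 ≠ 0 := by
      rw [hwval']; exact sub_ne_zero.mpr (Ne.symm hne)
    have hwle' : |(1 - qtf ψ0 ψ1) + (1 - ptf ψ0 ψ1) - 1| ≤ w0c p := by
      rw [hwval', abs_le]; constructor <;> linarith
    -- derivatives of the affine maps
    have hudx : HasDerivAt (fun t => ptf t ψ1) (1 - p) ψ0 := by
      have hfe : (fun t => ptf t ψ1) = fun t => (1 - p) * t + (1 - ψ1) * p := by
        funext t; rw [hptf]; ring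
      rw [hfe]; simpa using ((hasDerivAt_id ψ0).const_mul (1 - p)).add_const ((1 - ψ1) * p)
    have hvdx : HasDerivAt (fun t => qtf t ψ1) p ψ0 := by
      have hfe : (fun t => qtf t ψ1) = fun t => p * t + (1 - ψ1) * (1 - p) := by
        funext t; rw [hqtf]; ring
      rw [hfe]; simpa using ((hasDerivAt_id ψ0).const_mul p).add_const ((1 - ψ1) * (1 - p))
    have hudy : HasDerivAt (fun t => ptf ψ0 t) (-p) ψ1 := by
      have hfe : (fun t => ptf ψ0 t) = fun t => -p * t + ((1 - ψ0) * p + ψ0) := by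
        funext t; rw [hptf]; ring
      rw [hfe]
      simpa using ((hasDerivAt_id ψ1).const_mul (-p)).add_const ((1 - ψ0) * p + ψ0)
    have hvdy : HasDerivAt (fun t => qtf ψ0 t) (-(1 - p)) ψ1 := by
      have hfe : (fun t => qtf ψ0 t) = fun t => -(1 - p) * t + ((1 - ψ0) * (1 - p) + ψ0) := by
        funext t; rw [hqtf]; ring
      rw [hfe]
      simpa using ((hasDerivAt_id ψ1).const_mul (-(1 - p))).add_const
        ((1 - ψ0) * (1 - p) + ψ0)
    refine ⟨?_, ?_, ?_, ?_⟩
    · -- g0, x-derivative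
      obtain ⟨d, hd, hds⟩ := master p hp hp1 _ hC0 (fun t => ptf t ψ1) (fun t => qtf t ψ1)
        ψ0 (1 - p) p 1 (1 - p) hudx hvdx (Or.inl rfl) (by linarith) (by linarith)
        (by ring) (by ring) hub hvb hwne hwle
      refine ⟨d, ?_, by simpa [hwval] using hds⟩
      exact hd.congr_of_eventuallyEq (Filter.Eventually.of_forall fun t => by
        simp only [hg0, hH, one_div])
    · -- g0, y-derivative
      obtain ⟨d, hd, hds⟩ := master p hp hp1 _ hC0 (fun t => ptf ψ0 t) (fun t => qtf ψ0 t)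
        ψ1 (-p) (-(1 - p)) (-1) p hudy hvdy (Or.inr rfl) (by linarith) (by linarith)
        (by ring) (by ring) hub hvb hwne hwle
      refine ⟨d, ?_, by simpa [hwval, neg_sub] using hds⟩
      exact hd.congr_of_eventuallyEq (Filter.Eventually.of_forall fun t => by
        simp only [hg0, hH, one_div])
    · -- g1, x-derivative
      have hudx' : HasDerivAt (fun t => 1 - qtf t ψ1) (-p) ψ0 := by
        simpa using hvdx.const_sub 1
      have hvdx' : HasDerivAt (fun t => 1 - ptf t ψ1) (-(1 - p)) ψ0 := by
        simpa using hudx.const_sub 1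
      obtain ⟨d, hd, hds⟩ := master p hp hp1 _ hC1 (fun t => 1 - qtf t ψ1)
        (fun t => 1 - ptf t ψ1) ψ0 (-p) (-(1 - p)) (-1) p hudx' hvdx' (Or.inr rfl)
        (by linarith) (by linarith) (by ring) (by ring) hub' hvb' hwne' hwle'
      refine ⟨d, ?_, by simpa [hwval', neg_sub] using hds⟩
      exact hd.congr_of_eventuallyEq (Filter.Eventually.of_forall fun t => by
        simp only [hg1, hH, one_div, sub_sub_cancel]
        ring_nf)
    · -- g1, y-derivative
      have hudy' : HasDerivAt (fun t => 1 - qtf ψ0 t) (1 - p) ψ1 := by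
        simpa using hvdy.const_sub 1
      have hvdy' : HasDerivAt (fun t => 1 - ptf ψ0 t) p ψ1 := by
        simpa using hudy.const_sub 1
      obtain ⟨d, hd, hds⟩ := master p hp hp1 _ hC1 (fun t => 1 - qtf ψ0 t)
        (fun t => 1 - ptf ψ0 t) ψ1 (1 - p) p 1 (1 - p) hudy' hvdy' (Or.inl rfl)
        (by linarith) (by linarith) (by ring) (by ring) hub' hvb' hwne' hwle'
      refine ⟨d, ?_, by simpa [hwval'] using hds⟩
      exact hd.congr_of_eventuallyEq (Filter.Eventually.of_forall fun t => by
        simp only [hg1, hH, one_div, sub_sub_cancel]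
        ring_nf)
  refine ⟨ε, hεpos, ?_, ?_⟩
  · intro ψ0 ψ1 h0 hlt he
    obtain ⟨⟨d1, hd1, hs1⟩, ⟨d2, hd2, hs2⟩, ⟨d3, hd3, hs3⟩, ⟨d4, hd4, hs4⟩⟩ :=
      mainpt ψ0 ψ1 h0 (le_of_lt (lt_of_le_of_lt h0 hlt)) (ne_of_lt hlt)
        (lt_trans hlt he) he
    exact ⟨⟨d1, by nlinarith [hs1], hd1⟩, ⟨d2, by nlinarith [hs2], hd2⟩,
      ⟨d3, by nlinarith [hs3], hd3⟩, ⟨d4, by nlinarith [hs4], hd4⟩⟩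
  · intro ψ0 ψ1 h1 hlt he
    obtain ⟨⟨d1, hd1, hs1⟩, ⟨d2, hd2, hs2⟩, ⟨d3, hd3, hs3⟩, ⟨d4, hd4, hs4⟩⟩ :=
      mainpt ψ0 ψ1 (le_of_lt (lt_of_le_of_lt h1 hlt)) h1 (ne_of_gt hlt) he
        (lt_trans hlt he)
    exact ⟨⟨d1, by nlinarith [hs1], hd1⟩, ⟨d2, by nlinarith [hs2], hd2⟩,
      ⟨d3, by nlinarith [hs3], hd3⟩, ⟨d4, by nlinarith [hs4], hd4⟩⟩
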